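/- (Holley criterion for monotone coupling on a finite state space.) Let S be a finite partially ordered set of configurations (e.g., functions V → ℤ with the pointwise order restricted to a finite set), and let μ, μ' be irreducible probability measures on S in the single-site-update sense. Suppose (a) there exist h ≼ h' with μ[h] > 0 and μ'[h'] > 0, and (b) for every site x, every k, and all compatible off-x configurations χ ≼ χ', the single-site conditional laws satisfy μ[h(x) ≥ k | h off x = χ] ≤ μ'[h(x) ≥ k | h off x = χ']. Then μ is stochastically dominated by μ': there exists a coupling ν of (h, h') with marginals μ, μ' and ν[h ≼ h'] = 1; in particular ∫F dμ ≤ ∫F dμ' for every increasing F: S → ℝ. -/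

import Mathlib

/-- Irreducibility in the single-site-update sense: any two configurations of positive measure
are joined by a path of single-site changes through configurations of positive measure. -/

def IrreducibleSS {V : Type*} (μ : (V → ℤ) → ℝ) : Prop :=
  ∀ f g : V → ℤ, 0 < μ f → 0 < μ g →
    ∃ (m : ℕ) (path : ℕ → V → ℤ), path 0 = f ∧ path m = g ∧
      (∀ i ≤ m, 0 < μ (path i)) ∧
      ∀ i < m, ∃ x : V, ∀ y : V, y ≠ x → path (i + 1) y = path i y


open Finset Function

attribute [local instance 0] Classical.propDecidable
set_option linter.unusedSectionVars false
set_option linter.unusedVariables false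
set_option maxHeartbeats 1000000

noncomputable section Holley

variable {V : Type*} [Fintype V] [DecidableEq V]

/-- agree off x -/
def OffEq (x : V) (h f : V → ℤ) : Prop := ∀ y, y ≠ x → h y = f y

lemma OffEq.refl (x : V) (f : V → ℤ) : OffEq x f f := fun _ _ => rfl

lemma OffEq.symm {x : V} {h f : V → ℤ} (h1 : OffEq x h f) : OffEq x f h :=
  fun y hy => (h1 y hy).symm

lemma OffEq.update_eq {x : V} {h f : V → ℤ} (h1 : OffEq x h f) :
    Function.update f x (h x) = h := by
  funext y
  rcases eq_or_ne y x with rfl | hy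
  · simp
  · simp [Function.update_of_ne hy, h1 y hy]

lemma offEq_update (x : V) (f : V → ℤ) (a : ℤ) : OffEq x (Function.update f x a) f :=
  fun y hy => Function.update_of_ne hy a f

lemma OffEq.update_congr {x : V} {h f : V → ℤ} (h1 : OffEq x h f) (a : ℤ) :
    Function.update f x a = Function.update h x a := by
  funext y
  rcases eq_or_ne y x with rfl | hy
  · simp
  · simp [Function.update_of_ne hy, (h1 y hy).symm]

lemma sum_col (s : Finset (V → ℤ)) (A : Finset ℤ) (hsA : ∀ h ∈ s, ∀ x : V, h x ∈ A)
    (x : V) (f : V → ℤ) (F : (V → ℤ) → ℝ)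
    (hF : ∀ a, F (Function.update f x a) ≠ 0 → Function.update f x a ∈ s) :
    ∑ h ∈ s, (if OffEq x h f then F h else 0) = ∑ a ∈ A, F (Function.update f x a) := by
  classical
  rw [← Finset.sum_filter]
  have h1 : ∑ h ∈ s.filter (fun h => OffEq x h f), F h
      = ∑ a ∈ A.filter (fun a => Function.update f x a ∈ s), F (Function.update f x a) := by
    apply Finset.sum_nbij' (fun h => h x) (fun a => Function.update f x a)
    · intro h hh
      simp only [Finset.mem_filter] at hh ⊢
      exact ⟨hsA h hh.1 x, by rw [hh.2.update_eq]; exact hh.1⟩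
    · intro a ha
      simp only [Finset.mem_filter] at ha ⊢
      exact ⟨ha.2, offEq_update x f a⟩
    · intro h hh
      simp only [Finset.mem_filter] at hh
      exact hh.2.update_eq
    · intro a ha
      simp
    · intro h hh
      simp only [Finset.mem_filter] at hh
      rw [hh.2.update_eq]
  rw [h1]
  apply Finset.sum_subset (Finset.filter_subset _ _)
  intro a ha hna
  by_contra hne
  exact hna (Finset.mem_filter.mpr ⟨ha, hF a hne⟩)

def colsum (μ : (V → ℤ) → ℝ) (A : Finset ℤ) (x : V) (f : V → ℤ) : ℝ :=
  ∑ a ∈ A, μ (Function.update f x a)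

def Pker (μ : (V → ℤ) → ℝ) (A : Finset ℤ) (x : V) (f h : V → ℤ) : ℝ :=
  if OffEq x h f then μ h / colsum μ A x f else 0

variable {μ : (V → ℤ) → ℝ} {s : Finset (V → ℤ)} {A : Finset ℤ}

lemma colsum_nonneg (hnn : ∀ f, 0 ≤ μ f) (x : V) (f : V → ℤ) : 0 ≤ colsum μ A x f :=
  Finset.sum_nonneg fun a _ => hnn _

lemma colsum_pos (hnn : ∀ f, 0 ≤ μ f) (hs : ∀ f, μ f ≠ 0 → f ∈ s)
    (hsA : ∀ h ∈ s, ∀ x : V, h x ∈ A) {x : V} {f : V → ℤ} (hf : 0 < μ f) :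
    0 < colsum μ A x f := by
  have hfs : f ∈ s := hs f (ne_of_gt hf)
  have h1 : μ (Function.update f x (f x)) ≤ colsum μ A x f :=
    Finset.single_le_sum (fun a _ => hnn _) (hsA f hfs x)
  rw [Function.update_eq_self] at h1
  exact lt_of_lt_of_le hf h1

lemma colsum_offEq {x : V} {f h : V → ℤ} (hfh : OffEq x h f) :
    colsum μ A x f = colsum μ A x h := by
  apply Finset.sum_congr rfl
  intro a _
  congr 1
  funext y
  rcases eq_or_ne y x with rfl | hy
  · simp
  · simp [Function.update_of_ne hy, (hfh y hy).symm]

lemma Pker_nonneg (hnn : ∀ f, 0 ≤ μ f) (x : V) (f h : V → ℤ) : 0 ≤ Pker μ A x f h := by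
  unfold Pker
  split_ifs
  · exact div_nonneg (hnn _) (colsum_nonneg hnn x f)
  · exact le_refl _

lemma Pker_ne_zero {x : V} {f h : V → ℤ} (hP : Pker μ A x f h ≠ 0) :
    μ h ≠ 0 ∧ OffEq x h f := by
  unfold Pker at hP
  split_ifs at hP with h1
  · refine ⟨fun hz => hP ?_, h1⟩
    rw [hz, zero_div]
  · exact absurd rfl hP

lemma Pker_pos (hnn : ∀ f, 0 ≤ μ f) (hs : ∀ f, μ f ≠ 0 → f ∈ s)
    (hsA : ∀ h ∈ s, ∀ x : V, h x ∈ A) {x : V} {f h : V → ℤ}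
    (hf : 0 < μ f) (hh : 0 < μ h) (hfh : OffEq x h f) : 0 < Pker μ A x f h := by
  unfold Pker
  rw [if_pos hfh]
  exact div_pos hh (colsum_pos hnn hs hsA hf)

lemma Pker_rowsum (hnn : ∀ f, 0 ≤ μ f) (hs : ∀ f, μ f ≠ 0 → f ∈ s)
    (hsA : ∀ h ∈ s, ∀ x : V, h x ∈ A) {x : V} {f : V → ℤ} (hf : 0 < μ f) :
    ∑ h ∈ s, Pker μ A x f h = 1 := by
  have h1 : ∑ h ∈ s, Pker μ A x f h = ∑ a ∈ A, μ (Function.update f x a) / colsum μ A x f := by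
    apply sum_col s A hsA x f
    intro a ha
    apply hs
    intro hz
    rw [hz, zero_div] at ha
    exact ha rfl
  rw [h1, ← Finset.sum_div]
  exact div_self (ne_of_gt (colsum_pos hnn hs hsA hf))

lemma Pker_detailed (hnn : ∀ f, 0 ≤ μ f) (x : V) (f h : V → ℤ) :
    μ f * Pker μ A x f h = μ h * Pker μ A x h f := by
  unfold Pker
  by_cases h1 : OffEq x h f
  · rw [if_pos h1, if_pos h1.symm, colsum_offEq h1]
    ring
  · rw [if_neg h1, if_neg (fun h2 => h1 (OffEq.symm h2))]
    ring

lemma Pker_stationary (hnn : ∀ f, 0 ≤ μ f) (hs : ∀ f, μ f ≠ 0 → f ∈ s)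
    (hsA : ∀ h ∈ s, ∀ x : V, h x ∈ A) (x : V) (h : V → ℤ) :
    ∑ f ∈ s, μ f * Pker μ A x f h = μ h := by
  have h1 : ∀ f ∈ s, μ f * Pker μ A x f h = μ h * Pker μ A x h f :=
    fun f _ => Pker_detailed hnn x f h
  rw [Finset.sum_congr rfl h1, ← Finset.mul_sum]
  rcases eq_or_lt_of_le (hnn h) with hz | hp
  · rw [← hz]; ring
  · rw [Pker_rowsum hnn hs hsA hp, mul_one]


def Tail (k : ℤ) (α : ℤ →₀ ℝ) : ℝ := α.sum fun a v => if k ≤ a then v else 0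

lemma Tail_nonneg {α : ℤ →₀ ℝ} (h : ∀ a, 0 ≤ α a) (k : ℤ) : 0 ≤ Tail k α :=
  Finset.sum_nonneg fun a _ => by dsimp only; split_ifs; exacts [h a, le_refl _]

lemma Tail_sub_single (k A : ℤ) (m : ℝ) (α : ℤ →₀ ℝ) :
    Tail k (α - Finsupp.single A m) = Tail k α - (if k ≤ A then m else 0) := by
  unfold Tail
  rw [Finsupp.sum_sub_index (fun a b₁ b₂ => by split_ifs <;> simp)]
  congr 1
  rw [Finsupp.sum_single_index (by simp)]

lemma sum_sub_single (A : ℤ) (m : ℝ) (α : ℤ →₀ ℝ) :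
    ((α - Finsupp.single A m).sum fun _ v => v) = (α.sum fun _ v => v) - m := by
  rw [Finsupp.sum_sub_index (fun a b₁ b₂ => rfl)]
  congr 1
  rw [Finsupp.sum_single_index rfl]

lemma single_le_Tail {β : ℤ →₀ ℝ} (hβ : ∀ b, 0 ≤ β b) {k b : ℤ} (hb : b ∈ β.support)
    (hkb : k ≤ b) : β b ≤ Tail k β := by
  have h2 := Finset.single_le_sum (f := fun a => if k ≤ a then β a else 0)
    (fun a _ => by split_ifs; exacts [hβ a, le_refl _]) hb
  rw [if_pos hkb] at h2
  exact h2

lemma Tail_eq_zero_of_max {α : ℤ →₀ ℝ} {A k : ℤ} (hA : ∀ a ∈ α.support, a ≤ A)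
    (hk : A < k) : Tail k α = 0 := by
  apply Finset.sum_eq_zero
  intro a ha
  have hna : ¬ k ≤ a := not_le.mpr (lt_of_le_of_lt (hA a ha) hk)
  simp [hna]

lemma Tail_pos_elt {k : ℤ} {β : ℤ →₀ ℝ} (h : 0 < Tail k β) : ∃ b ∈ β.support, k ≤ b := by
  by_contra hc
  push_neg at hc
  have hz : Tail k β = 0 := Finset.sum_eq_zero fun a ha => by
    have hna : ¬ k ≤ a := not_le.mpr (hc a ha)
    simp [hna]
  rw [hz] at h
  exact lt_irrefl 0 h


lemma sub_single_apply (α : ℤ →₀ ℝ) (A a : ℤ) (m : ℝ) :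
    (α - Finsupp.single A m) a = α a - (if a = A then m else 0) := by
  rw [Finsupp.sub_apply, Finsupp.single_apply]
  congr 1
  split_ifs with h1 h2 h2 <;> first | rfl | (exact absurd h1.symm h2) | (exact absurd h2.symm h1)

lemma couple1d : ∀ (n : ℕ) (α β : ℤ →₀ ℝ), α.support.card + β.support.card ≤ n →
    (∀ a, 0 ≤ α a) → (∀ b, 0 ≤ β b) → (α.sum fun _ v => v) = (β.sum fun _ v => v) →
    (∀ k, Tail k α ≤ Tail k β) →
    ∃ γ : ℤ → ℤ → ℝ, (∀ a b, 0 ≤ γ a b) ∧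
      (∀ a b, γ a b ≠ 0 → a ≤ b ∧ a ∈ α.support ∧ b ∈ β.support) ∧
      (∀ a, ∑ b ∈ β.support, γ a b = α a) ∧
      (∀ b, ∑ a ∈ α.support, γ a b = β b) := by
  intro n
  induction n with
  | zero =>
    intro α β hcard hα hβ hsum htail
    have hαe : α.support = ∅ := Finset.card_eq_zero.mp (Nat.le_zero.mp (by omega))
    have hβe : β.support = ∅ := Finset.card_eq_zero.mp (Nat.le_zero.mp (by omega))
    refine ⟨fun _ _ => 0, fun _ _ => le_refl _, fun a b h => absurd rfl h, ?_, ?_⟩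
    · intro a
      rw [Finset.sum_const_zero]
      have : a ∉ α.support := by rw [hαe]; exact Finset.notMem_empty a
      exact (Finsupp.notMem_support_iff.mp this).symm
    · intro b
      rw [Finset.sum_const_zero]
      have : b ∉ β.support := by rw [hβe]; exact Finset.notMem_empty b
      exact (Finsupp.notMem_support_iff.mp this).symm
  | succ n IH =>
    intro α β hcard hα hβ hsum htail
    rcases Finset.eq_empty_or_nonempty α.support with hαe | hαne
    · -- α = 0, hence β = 0
      have hα0 : ∀ a, α a = 0 := fun a =>
        Finsupp.notMem_support_iff.mp (by rw [hαe]; exact Finset.notMem_empty a)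
      have hsumα : (α.sum fun _ v => v) = 0 := by
        unfold Finsupp.sum
        rw [hαe, Finset.sum_empty]
      have hβ0 : ∀ b ∈ β.support, β b = 0 := by
        have h0 : ∑ b ∈ β.support, β b = 0 := by
          have := hsum
          unfold Finsupp.sum at this
          rw [hαe, Finset.sum_empty] at this
          exact this.symm
        exact fun b hb => (Finset.sum_eq_zero_iff_of_nonneg (fun b _ => hβ b)).mp h0 b hb
      refine ⟨fun _ _ => 0, fun _ _ => le_refl _, fun a b h => absurd rfl h, ?_, ?_⟩
      · intro a
        rw [Finset.sum_const_zero]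
        exact (hα0 a).symm
      · intro b
        rw [Finset.sum_const_zero]
        rcases Finset.decidableMem b β.support with hb | hb
        · exact ((Finsupp.notMem_support_iff.mp hb)).symm
        · exact (hβ0 b hb).symm
    · -- main case
      set A := α.support.max' hαne with hAdef
      have hAmem : A ∈ α.support := α.support.max'_mem hαne
      have hAmax : ∀ a ∈ α.support, a ≤ A := fun a ha => α.support.le_max' a ha
      have hαA : 0 < α A := lt_of_le_of_ne (hα A) (Ne.symm (Finsupp.mem_support_iff.mp hAmem))
      have hTA : 0 < Tail A α := lt_of_lt_of_le hαA (single_le_Tail hα hAmem (le_refl A))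
      have hTAβ : 0 < Tail A β := lt_of_lt_of_le hTA (htail A)
      obtain ⟨b0, hb0mem, hb0⟩ := Tail_pos_elt hTAβ
      have hβne : β.support.Nonempty := ⟨b0, hb0mem⟩
      set B := β.support.max' hβne with hBdef
      have hBmem : B ∈ β.support := β.support.max'_mem hβne
      have hBmax : ∀ b ∈ β.support, b ≤ B := fun b hb => β.support.le_max' b hb
      have hAB : A ≤ B := le_trans hb0 (hBmax b0 hb0mem)
      have hβB : 0 < β B := lt_of_le_of_ne (hβ B) (Ne.symm (Finsupp.mem_support_iff.mp hBmem))
      set m := min (α A) (β B) with hmdef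
      have hm : 0 < m := lt_min hαA hβB
      set α' := α - Finsupp.single A m with hα'def
      set β' := β - Finsupp.single B m with hβ'def
      have hα'app : ∀ a, α' a = α a - (if a = A then m else 0) := fun a => sub_single_apply α A a m
      have hβ'app : ∀ b, β' b = β b - (if b = B then m else 0) := fun b => sub_single_apply β B b m
      have hα'nn : ∀ a, 0 ≤ α' a := by
        intro a
        rw [hα'app a]
        split_ifs with h1
        · rw [h1]; have := min_le_left (α A) (β B); linarith
        · simp [hα a]
      have hβ'nn : ∀ b, 0 ≤ β' b := by
        intro b
        rw [hβ'app b]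
        split_ifs with h1
        · rw [h1]; have := min_le_right (α A) (β B); linarith
        · simp [hβ b]
      have hα'sub : α'.support ⊆ α.support := by
        intro a ha
        rw [Finsupp.mem_support_iff] at ha ⊢
        intro h0
        apply ha
        rw [hα'app a, h0]
        have : a ≠ A := fun h => (Finsupp.mem_support_iff.mp hAmem) (h ▸ h0)
        simp [this]
      have hβ'sub : β'.support ⊆ β.support := by
        intro b hb
        rw [Finsupp.mem_support_iff] at hb ⊢
        intro h0
        apply hb
        rw [hβ'app b, h0]
        have : b ≠ B := fun h => (Finsupp.mem_support_iff.mp hBmem) (h ▸ h0)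
        simp [this]
      have hsum' : (α'.sum fun _ v => v) = (β'.sum fun _ v => v) := by
        rw [hα'def, hβ'def, sum_sub_single, sum_sub_single, hsum]
      have htail' : ∀ k, Tail k α' ≤ Tail k β' := by
        intro k
        rw [hα'def, hβ'def, Tail_sub_single, Tail_sub_single]
        by_cases hkA : k ≤ A
        · rw [if_pos hkA, if_pos (le_trans hkA hAB)]
          have := htail k
          linarith
        · rw [if_neg hkA]
          push_neg at hkA
          have hTα : Tail k α = 0 := Tail_eq_zero_of_max hAmax hkA
          rw [hTα, sub_zero]
          split_ifs with hkB
          · have := single_le_Tail hβ hBmem hkB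
            have := min_le_right (α A) (β B)
            linarith
          · push_neg at hkB
            have : Tail k β = 0 := Tail_eq_zero_of_max hBmax hkB
            linarith
      have hcard' : α'.support.card + β'.support.card ≤ n := by
        have hcases := min_cases (α A) (β B)
        have hlt : α'.support.card + β'.support.card < α.support.card + β.support.card := by
          rcases hcases with ⟨hmeq, _⟩ | ⟨hmeq, _⟩
          · have hAnot : A ∉ α'.support := by
              rw [Finsupp.notMem_support_iff, hα'app A, if_pos rfl, hmdef, hmeq]
              ring
            have : α'.support ⊂ α.support := Finset.ssubset_iff_of_subset hα'sub |>.mpr ⟨A, hAmem, hAnot⟩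
            have h1 := Finset.card_lt_card this
            have h2 := Finset.card_le_card hβ'sub
            omega
          · have hBnot : B ∉ β'.support := by
              rw [Finsupp.notMem_support_iff, hβ'app B, if_pos rfl, hmdef, hmeq]
              ring
            have : β'.support ⊂ β.support := Finset.ssubset_iff_of_subset hβ'sub |>.mpr ⟨B, hBmem, hBnot⟩
            have h1 := Finset.card_lt_card this
            have h2 := Finset.card_le_card hα'sub
            omega
        omega
      obtain ⟨γ', hγ'nn, hγ'supp, hγ'row, hγ'col⟩ := IH α' β' hcard' hα'nn hβ'nn hsum' htail'
      refine ⟨fun a b => γ' a b + (if a = A ∧ b = B then m else 0), ?_, ?_, ?_, ?_⟩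
      · intro a b
        have := hγ'nn a b
        dsimp only
        split_ifs <;> linarith
      · intro a b hne
        dsimp only at hne
        by_cases hab : a = A ∧ b = B
        · exact ⟨hab.1 ▸ hab.2 ▸ hAB, hab.1 ▸ hAmem, hab.2 ▸ hBmem⟩
        · rw [if_neg hab, add_zero] at hne
          obtain ⟨h1, h2, h3⟩ := hγ'supp a b hne
          exact ⟨h1, hα'sub h2, hβ'sub h3⟩
      · intro a
        rw [Finset.sum_add_distrib]
        have e1 : ∑ b ∈ β.support, γ' a b = α' a := by
          rw [← hγ'row a]
          symm
          apply Finset.sum_subset hβ'sub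
          intro b hb hnb
          by_contra hne
          exact hnb (hγ'supp a b hne).2.2
        have e2 : ∑ b ∈ β.support, (if a = A ∧ b = B then m else 0) = if a = A then m else 0 := by
          by_cases ha : a = A
          · subst ha
            have hcg : ∀ b ∈ β.support, (if A = A ∧ b = B then m else 0) = (if b = B then m else 0) :=
              fun b _ => by simp
            rw [Finset.sum_congr rfl hcg, Finset.sum_ite_eq' β.support B (fun _ => m),
              if_pos hBmem, if_pos rfl]
          · have hcg : ∀ b ∈ β.support, (if a = A ∧ b = B then m else 0) = 0 :=
              fun b _ => by simp [ha]
            rw [Finset.sum_congr rfl hcg, Finset.sum_const_zero, if_neg ha]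
        rw [e1, e2, hα'app a]
        ring
      · intro b
        rw [Finset.sum_add_distrib]
        have e1 : ∑ a ∈ α.support, γ' a b = β' b := by
          rw [← hγ'col b]
          symm
          apply Finset.sum_subset hα'sub
          intro a ha hna
          by_contra hne
          exact hna (hγ'supp a b hne).2.1
        have e2 : ∑ a ∈ α.support, (if a = A ∧ b = B then m else 0) = if b = B then m else 0 := by
          by_cases hb : b = B
          · subst hb
            have hcg : ∀ a ∈ α.support, (if a = A ∧ B = B then m else 0) = (if a = A then m else 0) :=
              fun a _ => by simp
            rw [Finset.sum_congr rfl hcg, Finset.sum_ite_eq' α.support A (fun _ => m),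
              if_pos hAmem, if_pos rfl]
          · have hcg : ∀ a ∈ α.support, (if a = A ∧ b = B then m else 0) = 0 :=
              fun a _ => by simp [hb]
            rw [Finset.sum_congr rfl hcg, Finset.sum_const_zero, if_neg hb]
        rw [e1, e2, hβ'app b]
        ring


section CondF

variable {μ μ' : (V → ℤ) → ℝ} {s : Finset (V → ℤ)} {A : Finset ℤ}

def condF (μ : (V → ℤ) → ℝ) (s : Finset (V → ℤ)) (A : Finset ℤ)
    (hs : ∀ f, μ f ≠ 0 → f ∈ s) (hsA : ∀ h ∈ s, ∀ x : V, h x ∈ A)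
    (x : V) (f : V → ℤ) : ℤ →₀ ℝ :=
  Finsupp.onFinset A (fun a => μ (Function.update f x a) / colsum μ A x f)
    (fun a ha => by
      have hμ : μ (Function.update f x a) ≠ 0 := fun hz => ha (by rw [hz, zero_div])
      have h2 := hsA _ (hs _ hμ) x
      rwa [Function.update_self] at h2)

lemma condF_apply (hs : ∀ f, μ f ≠ 0 → f ∈ s) (hsA : ∀ h ∈ s, ∀ x : V, h x ∈ A)
    (x : V) (f : V → ℤ) (a : ℤ) :
    condF μ s A hs hsA x f a = μ (Function.update f x a) / colsum μ A x f := rfl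

lemma condF_nonneg (hnn : ∀ f, 0 ≤ μ f) (hs : ∀ f, μ f ≠ 0 → f ∈ s)
    (hsA : ∀ h ∈ s, ∀ x : V, h x ∈ A) (x : V) (f : V → ℤ) (a : ℤ) :
    0 ≤ condF μ s A hs hsA x f a :=
  div_nonneg (hnn _) (colsum_nonneg hnn x f)

lemma condF_sum (hnn : ∀ f, 0 ≤ μ f) (hs : ∀ f, μ f ≠ 0 → f ∈ s)
    (hsA : ∀ h ∈ s, ∀ x : V, h x ∈ A) {x : V} {f : V → ℤ} (hf : 0 < μ f) :
    ((condF μ s A hs hsA x f).sum fun _ v => v) = 1 := by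
  rw [condF, Finsupp.onFinset_sum _ (fun a => rfl)]
  rw [← Finset.sum_div]
  exact div_self (ne_of_gt (colsum_pos hnn hs hsA hf))

lemma condF_tail (hs : ∀ f, μ f ≠ 0 → f ∈ s) (hsA : ∀ h ∈ s, ∀ x : V, h x ∈ A)
    (x : V) (f : V → ℤ) (k : ℤ) :
    Tail k (condF μ s A hs hsA x f)
      = (∑ a ∈ A, if k ≤ a then μ (Function.update f x a) else 0) / colsum μ A x f := by
  rw [Tail, condF, Finsupp.onFinset_sum _ (fun a => by simp)]
  rw [Finset.sum_div]
  apply Finset.sum_congr rfl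
  intro a _
  split_ifs
  · rfl
  · rw [zero_div]

lemma condF_tail_le (hnn : ∀ f, 0 ≤ μ f) (hnn' : ∀ f, 0 ≤ μ' f)
    (hs : ∀ f, μ f ≠ 0 → f ∈ s) (hs' : ∀ f, μ' f ≠ 0 → f ∈ s)
    (hsA : ∀ h ∈ s, ∀ x : V, h x ∈ A)
    (hHA : ∀ (x : V) (k : ℤ) (χ χ' : V → ℤ), (∀ y : V, y ≠ x → χ y ≤ χ' y) →
      (∑ a ∈ A, if k ≤ a then μ (Function.update χ x a) else 0) * colsum μ' A x χ' ≤
      (∑ a ∈ A, if k ≤ a then μ' (Function.update χ' x a) else 0) * colsum μ A x χ)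
    {x : V} {f g : V → ℤ} (hf : 0 < μ f) (hg : 0 < μ' g)
    (hfg : ∀ y : V, y ≠ x → f y ≤ g y) (k : ℤ) :
    Tail k (condF μ s A hs hsA x f) ≤ Tail k (condF μ' s A hs' hsA x g) := by
  rw [condF_tail, condF_tail]
  rw [div_le_div_iff₀ (colsum_pos hnn hs hsA hf) (colsum_pos hnn' hs' hsA hg)]
  exact hHA x k f g hfg

structure Setup (μ μ' : (V → ℤ) → ℝ) (s : Finset (V → ℤ)) (A : Finset ℤ) : Prop where
  hnn : ∀ f, 0 ≤ μ f
  hnn' : ∀ f, 0 ≤ μ' f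
  hs : ∀ f, μ f ≠ 0 → f ∈ s
  hs' : ∀ f, μ' f ≠ 0 → f ∈ s
  hsA : ∀ h ∈ s, ∀ x : V, h x ∈ A
  hHA : ∀ (x : V) (k : ℤ) (χ χ' : V → ℤ), (∀ y : V, y ≠ x → χ y ≤ χ' y) →
      (∑ a ∈ A, if k ≤ a then μ (Function.update χ x a) else 0) * colsum μ' A x χ' ≤
      (∑ a ∈ A, if k ≤ a then μ' (Function.update χ' x a) else 0) * colsum μ A x χ

/-- the coupled single-site conditional law -/
def gam (S : Setup μ μ' s A) (x : V) (p : (V → ℤ) × (V → ℤ)) : ℤ → ℤ → ℝ :=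
  if h : p.1 ≤ p.2 ∧ 0 < μ p.1 ∧ 0 < μ' p.2 then
    Classical.choose (couple1d
      ((condF μ s A S.hs S.hsA x p.1).support.card + (condF μ' s A S.hs' S.hsA x p.2).support.card)
      (condF μ s A S.hs S.hsA x p.1) (condF μ' s A S.hs' S.hsA x p.2) (le_refl _)
      (condF_nonneg S.hnn S.hs S.hsA x p.1) (condF_nonneg S.hnn' S.hs' S.hsA x p.2)
      (by rw [condF_sum S.hnn S.hs S.hsA h.2.1, condF_sum S.hnn' S.hs' S.hsA h.2.2])
      (fun k => condF_tail_le S.hnn S.hnn' S.hs S.hs' S.hsA S.hHA h.2.1 h.2.2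
        (fun y hy => h.1 y) k))
  else fun _ _ => 0

lemma gam_spec (S : Setup μ μ' s A) (x : V) {p : (V → ℤ) × (V → ℤ)}
    (h : p.1 ≤ p.2 ∧ 0 < μ p.1 ∧ 0 < μ' p.2) :
    (∀ a b, 0 ≤ gam S x p a b) ∧
    (∀ a b, gam S x p a b ≠ 0 → a ≤ b ∧ a ∈ (condF μ s A S.hs S.hsA x p.1).support ∧
      b ∈ (condF μ' s A S.hs' S.hsA x p.2).support) ∧
    (∀ a, ∑ b ∈ (condF μ' s A S.hs' S.hsA x p.2).support, gam S x p a b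
      = condF μ s A S.hs S.hsA x p.1 a) ∧
    (∀ b, ∑ a ∈ (condF μ s A S.hs S.hsA x p.1).support, gam S x p a b
      = condF μ' s A S.hs' S.hsA x p.2 b) := by
  have hE := couple1d
      ((condF μ s A S.hs S.hsA x p.1).support.card + (condF μ' s A S.hs' S.hsA x p.2).support.card)
      (condF μ s A S.hs S.hsA x p.1) (condF μ' s A S.hs' S.hsA x p.2) (le_refl _)
      (condF_nonneg S.hnn S.hs S.hsA x p.1) (condF_nonneg S.hnn' S.hs' S.hsA x p.2)
      (by rw [condF_sum S.hnn S.hs S.hsA h.2.1, condF_sum S.hnn' S.hs' S.hsA h.2.2])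
      (fun k => condF_tail_le S.hnn S.hnn' S.hs S.hs' S.hsA S.hHA h.2.1 h.2.2
        (fun y hy => h.1 y) k)
  rw [gam, dif_pos h]
  exact Classical.choose_spec hE

lemma gam_nonneg (S : Setup μ μ' s A) (x : V) (p : (V → ℤ) × (V → ℤ)) (a b : ℤ) :
    0 ≤ gam S x p a b := by
  rw [gam]
  split_ifs with h
  · exact ((gam_spec S x h).1 a b).trans_eq (by rw [gam, dif_pos h])
  · exact le_refl _

lemma gam_row (S : Setup μ μ' s A) (x : V) {p : (V → ℤ) × (V → ℤ)}
    (h : p.1 ≤ p.2 ∧ 0 < μ p.1 ∧ 0 < μ' p.2) (a : ℤ) :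
    ∑ b ∈ A, gam S x p a b = condF μ s A S.hs S.hsA x p.1 a := by
  obtain ⟨h1, h2, h3, h4⟩ := gam_spec S x h
  rw [← h3 a]
  symm
  apply Finset.sum_subset Finsupp.support_onFinset_subset
  intro b hb hnb
  by_contra hne
  exact hnb (h2 a b hne).2.2

lemma gam_col (S : Setup μ μ' s A) (x : V) {p : (V → ℤ) × (V → ℤ)}
    (h : p.1 ≤ p.2 ∧ 0 < μ p.1 ∧ 0 < μ' p.2) (b : ℤ) :
    ∑ a ∈ A, gam S x p a b = condF μ' s A S.hs' S.hsA x p.2 b := by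
  obtain ⟨h1, h2, h3, h4⟩ := gam_spec S x h
  rw [← h4 b]
  symm
  apply Finset.sum_subset Finsupp.support_onFinset_subset
  intro a ha hna
  by_contra hne
  exact hna (h2 a b hne).2.1

/-- the coupled single-site heat bath kernel -/
def Qker (S : Setup μ μ' s A) (x : V) (p q : (V → ℤ) × (V → ℤ)) : ℝ :=
  if p.1 ≤ p.2 then
    (if OffEq x q.1 p.1 ∧ OffEq x q.2 p.2 then gam S x p (q.1 x) (q.2 x) else 0)
  else Pker μ A x p.1 q.1 * Pker μ' A x p.2 q.2

lemma Qker_nonneg (S : Setup μ μ' s A) (x : V) (p q : (V → ℤ) × (V → ℤ)) :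
    0 ≤ Qker S x p q := by
  rw [Qker]
  split_ifs with h1 h2
  · exact gam_nonneg S x p _ _
  · exact le_refl _
  · exact mul_nonneg (Pker_nonneg S.hnn x _ _) (Pker_nonneg S.hnn' x _ _)

lemma Qker_good (S : Setup μ μ' s A) (x : V) {p q : (V → ℤ) × (V → ℤ)}
    (hp : 0 < μ p.1 ∧ 0 < μ' p.2) (hq : Qker S x p q ≠ 0) :
    0 < μ q.1 ∧ 0 < μ' q.2 := by
  rw [Qker] at hq
  split_ifs at hq with h1 h2
  · obtain ⟨hsp, hsup, _, _⟩ := gam_spec S x ⟨h1, hp⟩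
    obtain ⟨hab, hma, hmb⟩ := hsup _ _ hq
    rw [Finsupp.mem_support_iff, condF_apply] at hma hmb
    have hma2 : μ (Function.update p.1 x (q.1 x)) ≠ 0 := fun hz => hma (by rw [hz, zero_div])
    have hmb2 : μ' (Function.update p.2 x (q.2 x)) ≠ 0 := fun hz => hmb (by rw [hz, zero_div])
    rw [h2.1.update_eq] at hma2
    rw [h2.2.update_eq] at hmb2
    exact ⟨lt_of_le_of_ne (S.hnn _) (Ne.symm hma2), lt_of_le_of_ne (S.hnn' _) (Ne.symm hmb2)⟩
  · exact absurd rfl hq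
  · have hq1 : Pker μ A x p.1 q.1 ≠ 0 := fun hz => hq (by rw [hz, zero_mul])
    have hq2 : Pker μ' A x p.2 q.2 ≠ 0 := fun hz => hq (by rw [hz, mul_zero])
    exact ⟨lt_of_le_of_ne (S.hnn _) (Ne.symm (Pker_ne_zero hq1).1),
      lt_of_le_of_ne (S.hnn' _) (Ne.symm (Pker_ne_zero hq2).1)⟩

lemma Qker_absorb (S : Setup μ μ' s A) (x : V) {p q : (V → ℤ) × (V → ℤ)}
    (hp : 0 < μ p.1 ∧ 0 < μ' p.2) (hle : p.1 ≤ p.2) (hq : Qker S x p q ≠ 0) :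
    q.1 ≤ q.2 := by
  rw [Qker, if_pos hle] at hq
  split_ifs at hq with h2
  · obtain ⟨hsp, hsup, _, _⟩ := gam_spec S x ⟨hle, hp⟩
    obtain ⟨hab, _, _⟩ := hsup _ _ hq
    intro y
    rcases eq_or_ne y x with rfl | hy
    · exact hab
    · rw [h2.1 y hy, h2.2 y hy]
      exact hle y
  · exact absurd rfl hq

lemma Qker_margin1 (S : Setup μ μ' s A) (x : V) {p : (V → ℤ) × (V → ℤ)}
    (hp : 0 < μ p.1 ∧ 0 < μ' p.2) (h : V → ℤ) :
    ∑ k ∈ s, Qker S x p (h, k) = Pker μ A x p.1 h := by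
  by_cases hle : p.1 ≤ p.2
  · simp only [Qker, if_pos hle]
    by_cases hOf : OffEq x h p.1
    · have e1 : ∀ k ∈ s, (if OffEq x h p.1 ∧ OffEq x k p.2 then gam S x p (h x) (k x) else 0)
          = (if OffEq x k p.2 then gam S x p (h x) (k x) else 0) := by
        intro k _
        by_cases hk : OffEq x k p.2
        · rw [if_pos ⟨hOf, hk⟩, if_pos hk]
        · rw [if_neg (fun hh => hk hh.2), if_neg hk]
      rw [Finset.sum_congr rfl e1]
      have e2 := sum_col s A S.hsA x p.2 (fun k => gam S x p (h x) (k x)) ?_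
      · rw [e2]
        have e3 : ∀ b ∈ A, gam S x p (h x) (Function.update p.2 x b x) = gam S x p (h x) b := by
          intro b _
          rw [Function.update_self]
        rw [Finset.sum_congr rfl e3, gam_row S x ⟨hle, hp⟩, condF_apply, hOf.update_eq,
          Pker, if_pos hOf]
      · intro b hb
        obtain ⟨_, _, hmb⟩ := (gam_spec S x ⟨hle, hp⟩).2.1 _ _ hb
        rw [Finsupp.mem_support_iff, condF_apply, Function.update_self] at hmb
        have : μ' (Function.update p.2 x b) ≠ 0 := fun hz => hmb (by rw [hz, zero_div])
        exact S.hs' _ this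
    · have e1 : ∀ k ∈ s, (if OffEq x h p.1 ∧ OffEq x k p.2 then gam S x p (h x) (k x) else 0)
          = 0 := fun k _ => if_neg (fun hh => hOf hh.1)
      rw [Finset.sum_congr rfl e1, Finset.sum_const_zero, Pker, if_neg hOf]
  · simp only [Qker, if_neg hle]
    rw [← Finset.mul_sum, Pker_rowsum S.hnn' S.hs' S.hsA hp.2, mul_one]

lemma Qker_margin2 (S : Setup μ μ' s A) (x : V) {p : (V → ℤ) × (V → ℤ)}
    (hp : 0 < μ p.1 ∧ 0 < μ' p.2) (k : V → ℤ) :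
    ∑ h ∈ s, Qker S x p (h, k) = Pker μ' A x p.2 k := by
  by_cases hle : p.1 ≤ p.2
  · simp only [Qker, if_pos hle]
    by_cases hOf : OffEq x k p.2
    · have e1 : ∀ h ∈ s, (if OffEq x h p.1 ∧ OffEq x k p.2 then gam S x p (h x) (k x) else 0)
          = (if OffEq x h p.1 then gam S x p (h x) (k x) else 0) := by
        intro h _
        by_cases hk : OffEq x h p.1
        · rw [if_pos ⟨hk, hOf⟩, if_pos hk]
        · rw [if_neg (fun hh => hk hh.1), if_neg hk]
      rw [Finset.sum_congr rfl e1]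
      have e2 := sum_col s A S.hsA x p.1 (fun h => gam S x p (h x) (k x)) ?_
      · rw [e2]
        have e3 : ∀ a ∈ A, gam S x p (Function.update p.1 x a x) (k x) = gam S x p a (k x) := by
          intro a _
          rw [Function.update_self]
        rw [Finset.sum_congr rfl e3, gam_col S x ⟨hle, hp⟩, condF_apply, hOf.update_eq,
          Pker, if_pos hOf]
      · intro a ha
        obtain ⟨_, hma, _⟩ := (gam_spec S x ⟨hle, hp⟩).2.1 _ _ ha
        rw [Finsupp.mem_support_iff, condF_apply, Function.update_self] at hma
        have : μ (Function.update p.1 x a) ≠ 0 := fun hz => hma (by rw [hz, zero_div])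
        exact S.hs _ this
    · have e1 : ∀ h ∈ s, (if OffEq x h p.1 ∧ OffEq x k p.2 then gam S x p (h x) (k x) else 0)
          = 0 := fun h _ => if_neg (fun hh => hOf hh.2)
      rw [Finset.sum_congr rfl e1, Finset.sum_const_zero, Pker, if_neg hOf]
  · simp only [Qker, if_neg hle]
    rw [← Finset.sum_mul, Pker_rowsum S.hnn S.hs S.hsA hp.1, one_mul]

lemma Qker_prod_pos (S : Setup μ μ' s A) (x : V) {p : (V → ℤ) × (V → ℤ)}
    (hp : 0 < μ p.1 ∧ 0 < μ' p.2) (hnle : ¬ p.1 ≤ p.2) {h k : V → ℤ}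
    (hh : 0 < μ h) (hOh : OffEq x h p.1) (hk : 0 < μ' k) (hOk : OffEq x k p.2) :
    0 < Qker S x p (h, k) := by
  rw [Qker, if_neg hnle]
  exact mul_pos (Pker_pos S.hnn S.hs S.hsA hp.1 hh hOh)
    (Pker_pos S.hnn' S.hs' S.hsA hp.2 hk hOk)

end CondF

def Pbar (μ : (V → ℤ) → ℝ) (A : Finset ℤ) (f h : V → ℤ) : ℝ :=
  (Fintype.card V : ℝ)⁻¹ * ∑ x : V, Pker μ A x f h

def Qbar (S : Setup μ μ' s A) (p q : (V → ℤ) × (V → ℤ)) : ℝ :=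
  (Fintype.card V : ℝ)⁻¹ * ∑ x : V, Qker S x p q

lemma Pbar_nonneg (hnn : ∀ f, 0 ≤ μ f) (f h : V → ℤ) : 0 ≤ Pbar μ A f h :=
  mul_nonneg (inv_nonneg.mpr (Nat.cast_nonneg _)) (Finset.sum_nonneg fun x _ => Pker_nonneg hnn x f h)

lemma Pbar_rowsum [Nonempty V] (hnn : ∀ f, 0 ≤ μ f) (hs : ∀ f, μ f ≠ 0 → f ∈ s)
    (hsA : ∀ h ∈ s, ∀ x : V, h x ∈ A) {f : V → ℤ} (hf : 0 < μ f) :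
    ∑ h ∈ s, Pbar μ A f h = 1 := by
  have hcard : (0 : ℝ) < (Fintype.card V : ℝ) := by
    exact_mod_cast Fintype.card_pos
  simp only [Pbar]
  rw [← Finset.mul_sum, Finset.sum_comm]
  have e1 : ∀ x ∈ (Finset.univ : Finset V), ∑ h ∈ s, Pker μ A x f h = 1 :=
    fun x _ => Pker_rowsum hnn hs hsA hf
  rw [Finset.sum_congr rfl e1, Finset.sum_const, Finset.card_univ, nsmul_eq_mul, mul_one]
  exact inv_mul_cancel₀ (ne_of_gt hcard)

lemma Pbar_stationary [Nonempty V] (hnn : ∀ f, 0 ≤ μ f) (hs : ∀ f, μ f ≠ 0 → f ∈ s)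
    (hsA : ∀ h ∈ s, ∀ x : V, h x ∈ A) (h : V → ℤ) :
    ∑ f ∈ s, μ f * Pbar μ A f h = μ h := by
  have hcard : (0 : ℝ) < (Fintype.card V : ℝ) := by
    exact_mod_cast Fintype.card_pos
  have e1 : ∀ f ∈ s, μ f * Pbar μ A f h
      = (Fintype.card V : ℝ)⁻¹ * ∑ x : V, μ f * Pker μ A x f h := by
    intro f _
    rw [Pbar, Finset.mul_sum, Finset.mul_sum]
    rw [Finset.sum_congr rfl (fun (x : V) (_ : x ∈ Finset.univ) =>
      show μ f * ((Fintype.card V : ℝ)⁻¹ * Pker μ A x f h)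
        = (Fintype.card V : ℝ)⁻¹ * (μ f * Pker μ A x f h) by ring), ← Finset.mul_sum]
  rw [Finset.sum_congr rfl e1, ← Finset.mul_sum, Finset.sum_comm]
  have e2 : ∀ x ∈ (Finset.univ : Finset V), ∑ f ∈ s, μ f * Pker μ A x f h = μ h :=
    fun x _ => Pker_stationary hnn hs hsA x h
  rw [Finset.sum_congr rfl e2, Finset.sum_const, Finset.card_univ, nsmul_eq_mul, ← mul_assoc,
    inv_mul_cancel₀ (ne_of_gt hcard), one_mul]

lemma Qbar_nonneg (S : Setup μ μ' s A) (p q : (V → ℤ) × (V → ℤ)) : 0 ≤ Qbar S p q :=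
  mul_nonneg (inv_nonneg.mpr (Nat.cast_nonneg _)) (Finset.sum_nonneg fun x _ => Qker_nonneg S x p q)

lemma Qbar_good (S : Setup μ μ' s A) {p q : (V → ℤ) × (V → ℤ)}
    (hp : 0 < μ p.1 ∧ 0 < μ' p.2) (hq : Qbar S p q ≠ 0) : 0 < μ q.1 ∧ 0 < μ' q.2 := by
  rw [Qbar] at hq
  have h1 : ∑ x : V, Qker S x p q ≠ 0 := fun hz => hq (by rw [hz, mul_zero])
  obtain ⟨x, _, hx⟩ := Finset.exists_ne_zero_of_sum_ne_zero h1
  exact Qker_good S x hp hx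

lemma Qbar_absorb (S : Setup μ μ' s A) {p q : (V → ℤ) × (V → ℤ)}
    (hp : 0 < μ p.1 ∧ 0 < μ' p.2) (hle : p.1 ≤ p.2) (hq : Qbar S p q ≠ 0) : q.1 ≤ q.2 := by
  rw [Qbar] at hq
  have h1 : ∑ x : V, Qker S x p q ≠ 0 := fun hz => hq (by rw [hz, mul_zero])
  obtain ⟨x, _, hx⟩ := Finset.exists_ne_zero_of_sum_ne_zero h1
  exact Qker_absorb S x hp hle hx

lemma Qbar_margin1 (S : Setup μ μ' s A) {p : (V → ℤ) × (V → ℤ)}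
    (hp : 0 < μ p.1 ∧ 0 < μ' p.2) (h : V → ℤ) :
    ∑ k ∈ s, Qbar S p (h, k) = Pbar μ A p.1 h := by
  have e : ∀ k ∈ s, Qbar S p (h, k) = (Fintype.card V : ℝ)⁻¹ * ∑ x : V, Qker S x p (h, k) :=
    fun k _ => rfl
  rw [Finset.sum_congr rfl e, ← Finset.mul_sum, Finset.sum_comm, Pbar]
  congr 1
  exact Finset.sum_congr rfl fun x _ => Qker_margin1 S x hp h

lemma Qbar_margin2 (S : Setup μ μ' s A) {p : (V → ℤ) × (V → ℤ)}
    (hp : 0 < μ p.1 ∧ 0 < μ' p.2) (k : V → ℤ) :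
    ∑ h ∈ s, Qbar S p (h, k) = Pbar μ' A p.2 k := by
  have e : ∀ h ∈ s, Qbar S p (h, k) = (Fintype.card V : ℝ)⁻¹ * ∑ x : V, Qker S x p (h, k) :=
    fun h _ => rfl
  rw [Finset.sum_congr rfl e, ← Finset.mul_sum, Finset.sum_comm, Pbar]
  congr 1
  exact Finset.sum_congr rfl fun x _ => Qker_margin2 S x hp k

lemma Qbar_rowsum [Nonempty V] (S : Setup μ μ' s A) {p : (V → ℤ) × (V → ℤ)}
    (hp : 0 < μ p.1 ∧ 0 < μ' p.2) :
    ∑ q ∈ s ×ˢ s, Qbar S p q = 1 := by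
  rw [Finset.sum_product]
  have e1 : ∀ h ∈ s, ∑ k ∈ s, Qbar S p (h, k) = Pbar μ A p.1 h :=
    fun h _ => Qbar_margin1 S hp h
  rw [Finset.sum_congr rfl e1]
  exact Pbar_rowsum S.hnn S.hs S.hsA hp.1

lemma Qbar_pos [Nonempty V] (S : Setup μ μ' s A) {p : (V → ℤ) × (V → ℤ)}
    (hp : 0 < μ p.1 ∧ 0 < μ' p.2) (hnle : ¬ p.1 ≤ p.2) {h k : V → ℤ} {x : V}
    (hh : 0 < μ h) (hOh : OffEq x h p.1) (hk : 0 < μ' k) (hOk : OffEq x k p.2) :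
    0 < Qbar S p (h, k) := by
  have hcard : (0 : ℝ) < (Fintype.card V : ℝ) := by
    exact_mod_cast Fintype.card_pos
  apply mul_pos (inv_pos.mpr hcard)
  apply Finset.sum_pos' (fun y _ => Qker_nonneg S y p (h, k))
  exact ⟨x, Finset.mem_univ x, Qker_prod_pos S x hp hnle hh hOh hk hOk⟩

def Qpow (S : Setup μ μ' s A) : ℕ → ((V → ℤ) × (V → ℤ)) → ((V → ℤ) × (V → ℤ)) → ℝ
  | 0 => fun p q => if p = q then 1 else 0
  | n + 1 => fun p q => ∑ r ∈ s ×ˢ s, Qpow S n p r * Qbar S r q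

lemma good_mem (S : Setup μ μ' s A) {p : (V → ℤ) × (V → ℤ)}
    (hp : 0 < μ p.1 ∧ 0 < μ' p.2) : p ∈ s ×ˢ s := by
  rw [Finset.mem_product]
  exact ⟨S.hs _ (ne_of_gt hp.1), S.hs' _ (ne_of_gt hp.2)⟩

lemma Qpow_nonneg (S : Setup μ μ' s A) (n : ℕ) (p q : (V → ℤ) × (V → ℤ)) :
    0 ≤ Qpow S n p q := by
  induction n generalizing p q with
  | zero =>
    simp only [Qpow]
    split_ifs
    · exact zero_le_one
    · exact le_refl _
  | succ n IH =>
    exact Finset.sum_nonneg fun r _ => mul_nonneg (IH p r) (Qbar_nonneg S r q)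

lemma Qpow_good (S : Setup μ μ' s A) (n : ℕ) {p q : (V → ℤ) × (V → ℤ)}
    (hp : 0 < μ p.1 ∧ 0 < μ' p.2) (hq : Qpow S n p q ≠ 0) : 0 < μ q.1 ∧ 0 < μ' q.2 := by
  induction n generalizing p q with
  | zero =>
    simp only [Qpow] at hq
    split_ifs at hq with h
    · exact h ▸ hp
    · exact absurd rfl hq
  | succ n IH =>
    rw [Qpow] at hq
    obtain ⟨r, _, hr⟩ := Finset.exists_ne_zero_of_sum_ne_zero hq
    have h1 : Qpow S n p r ≠ 0 := fun hz => hr (by rw [hz, zero_mul])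
    have h2 : Qbar S r q ≠ 0 := fun hz => hr (by rw [hz, mul_zero])
    exact Qbar_good S (IH hp h1) h2

lemma Qpow_absorb (S : Setup μ μ' s A) (n : ℕ) {p q : (V → ℤ) × (V → ℤ)}
    (hp : 0 < μ p.1 ∧ 0 < μ' p.2) (hle : p.1 ≤ p.2) (hq : Qpow S n p q ≠ 0) :
    q.1 ≤ q.2 := by
  induction n generalizing p q with
  | zero =>
    simp only [Qpow] at hq
    split_ifs at hq with h
    · exact h ▸ hle
    · exact absurd rfl hq
  | succ n IH =>
    rw [Qpow] at hq
    obtain ⟨r, _, hr⟩ := Finset.exists_ne_zero_of_sum_ne_zero hq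
    have h1 : Qpow S n p r ≠ 0 := fun hz => hr (by rw [hz, zero_mul])
    have h2 : Qbar S r q ≠ 0 := fun hz => hr (by rw [hz, mul_zero])
    exact Qbar_absorb S (Qpow_good S n hp h1) (IH hp hle h1) h2

lemma Qpow_rowsum [Nonempty V] (S : Setup μ μ' s A) (n : ℕ) {p : (V → ℤ) × (V → ℤ)}
    (hp : 0 < μ p.1 ∧ 0 < μ' p.2) : ∑ q ∈ s ×ˢ s, Qpow S n p q = 1 := by
  induction n generalizing p with
  | zero =>
    simp only [Qpow]
    rw [Finset.sum_ite_eq (s ×ˢ s) p (fun _ => (1:ℝ))]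
    rw [if_pos (good_mem S hp)]
  | succ n IH =>
    simp only [Qpow]
    rw [Finset.sum_comm]
    have e1 : ∀ r ∈ s ×ˢ s, ∑ q ∈ s ×ˢ s, Qpow S n p r * Qbar S r q = Qpow S n p r := by
      intro r _
      rcases eq_or_ne (Qpow S n p r) 0 with hz | hz
      · rw [hz]
        simp
      · rw [← Finset.mul_sum, Qbar_rowsum S (Qpow_good S n hp hz), mul_one]
    rw [Finset.sum_congr rfl e1, IH hp]

lemma Qpow_left (S : Setup μ μ' s A) (n : ℕ) {p : (V → ℤ) × (V → ℤ)} (q : (V → ℤ) × (V → ℤ))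
    (hp : 0 < μ p.1 ∧ 0 < μ' p.2) :
    Qpow S (n + 1) p q = ∑ r ∈ s ×ˢ s, Qbar S p r * Qpow S n r q := by
  induction n generalizing p q with
  | zero =>
    have eL : ∑ r ∈ s ×ˢ s, Qpow S 0 p r * Qbar S r q = Qbar S p q := by
      have e0 : ∀ r ∈ s ×ˢ s, Qpow S 0 p r * Qbar S r q = if p = r then Qbar S r q else 0 := by
        intro r _
        simp only [Qpow]
        by_cases h : p = r
        · rw [if_pos h, if_pos h, one_mul]
        · rw [if_neg h, if_neg h, zero_mul]
      rw [Finset.sum_congr rfl e0, Finset.sum_ite_eq (s ×ˢ s) p (fun r => Qbar S r q),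
        if_pos (good_mem S hp)]
    show ∑ r ∈ s ×ˢ s, Qpow S 0 p r * Qbar S r q = _
    rw [eL]
    have e1 : ∀ r ∈ s ×ˢ s, Qbar S p r * Qpow S 0 r q = if q = r then Qbar S p r else 0 := by
      intro r _
      simp only [Qpow]
      by_cases h : r = q
      · rw [if_pos h, if_pos h.symm, mul_one]
      · rw [if_neg h, if_neg (fun hh => h hh.symm), mul_zero]
    rw [Finset.sum_congr rfl e1, Finset.sum_ite_eq (s ×ˢ s) q (fun r => Qbar S p r)]
    split_ifs with h
    · rfl
    · rcases eq_or_ne (Qbar S p q) 0 with hz | hz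
      · rw [hz]
      · exact absurd (good_mem S (Qbar_good S hp hz)) h
  | succ n IH =>
    show ∑ r ∈ s ×ˢ s, Qpow S (n+1) p r * Qbar S r q = _
    have e1 : ∀ r ∈ s ×ˢ s, Qpow S (n+1) p r * Qbar S r q
        = ∑ t ∈ s ×ˢ s, Qbar S p t * (Qpow S n t r * Qbar S r q) := by
      intro r _
      rw [IH r hp, Finset.sum_mul]
      exact Finset.sum_congr rfl fun t _ => by ring
    rw [Finset.sum_congr rfl e1, Finset.sum_comm]
    apply Finset.sum_congr rfl
    intro t _
    rw [← Finset.mul_sum]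
    rfl

def ordMass (S : Setup μ μ' s A) (n : ℕ) (p : (V → ℤ) × (V → ℤ)) : ℝ :=
  ∑ q ∈ (s ×ˢ s).filter (fun q => q.1 ≤ q.2), Qpow S n p q

lemma ordMass_nonneg (S : Setup μ μ' s A) (n : ℕ) (p : (V → ℤ) × (V → ℤ)) :
    0 ≤ ordMass S n p :=
  Finset.sum_nonneg fun q _ => Qpow_nonneg S n p q

lemma ordMass_one [Nonempty V] (S : Setup μ μ' s A) (n : ℕ) {p : (V → ℤ) × (V → ℤ)}
    (hp : 0 < μ p.1 ∧ 0 < μ' p.2) (hle : p.1 ≤ p.2) : ordMass S n p = 1 := by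
  rw [ordMass, Finset.sum_filter_of_ne, Qpow_rowsum S n hp]
  intro q _ hq
  exact Qpow_absorb S n hp hle hq

lemma ordMass_mono [Nonempty V] (S : Setup μ μ' s A) (n : ℕ) {p : (V → ℤ) × (V → ℤ)}
    (hp : 0 < μ p.1 ∧ 0 < μ' p.2) : ordMass S n p ≤ ordMass S (n + 1) p := by
  have key : ordMass S (n+1) p = ∑ r ∈ s ×ˢ s, Qpow S n p r
      * (∑ q ∈ (s ×ˢ s).filter (fun q => q.1 ≤ q.2), Qbar S r q) := by
    rw [ordMass]
    simp only [Qpow]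
    rw [Finset.sum_comm]
    exact Finset.sum_congr rfl fun r _ => by rw [← Finset.mul_sum]
  rw [key]
  have h2 : ∀ r ∈ (s ×ˢ s).filter (fun q => q.1 ≤ q.2), Qpow S n p r
      ≤ Qpow S n p r * (∑ q ∈ (s ×ˢ s).filter (fun q => q.1 ≤ q.2), Qbar S r q) := by
    intro r hr
    rcases eq_or_ne (Qpow S n p r) 0 with hz | hz
    · rw [hz, zero_mul]
    · have hgood := Qpow_good S n hp hz
      have hle : r.1 ≤ r.2 := (Finset.mem_filter.mp hr).2
      have hsum1 : ∑ q ∈ (s ×ˢ s).filter (fun q => q.1 ≤ q.2), Qbar S r q = 1 := by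
        rw [Finset.sum_filter_of_ne, Qbar_rowsum S hgood]
        intro q _ hq
        exact Qbar_absorb S hgood hle hq
      rw [hsum1, mul_one]
  calc ordMass S n p ≤ ∑ r ∈ (s ×ˢ s).filter (fun q => q.1 ≤ q.2), Qpow S n p r
        * (∑ q ∈ (s ×ˢ s).filter (fun q => q.1 ≤ q.2), Qbar S r q) :=
      Finset.sum_le_sum h2
    _ ≤ _ := by
      apply Finset.sum_le_sum_of_subset_of_nonneg (Finset.filter_subset _ _)
      intro r _ _
      exact mul_nonneg (Qpow_nonneg S n p r)
        (Finset.sum_nonneg fun q _ => Qbar_nonneg S r q)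

lemma ordMass_mono_le [Nonempty V] (S : Setup μ μ' s A) {m n : ℕ} (hmn : m ≤ n)
    {p : (V → ℤ) × (V → ℤ)} (hp : 0 < μ p.1 ∧ 0 < μ' p.2) :
    ordMass S m p ≤ ordMass S n p := by
  induction n with
  | zero =>
    rw [Nat.le_zero.mp hmn]
  | succ n IH =>
    by_cases h : m = n + 1
    · rw [h]
    · have h2 : m ≤ n := by omega
      exact le_trans (IH h2) (ordMass_mono S n hp)

lemma ordMass_step [Nonempty V] (S : Setup μ μ' s A) (n : ℕ) {p : (V → ℤ) × (V → ℤ)}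
    (hp : 0 < μ p.1 ∧ 0 < μ' p.2) :
    ordMass S (n + 1) p = ∑ r ∈ s ×ˢ s, Qbar S p r * ordMass S n r := by
  rw [ordMass]
  have e0 : ∀ q ∈ (s ×ˢ s).filter (fun q => q.1 ≤ q.2),
      Qpow S (n+1) p q = ∑ r ∈ s ×ˢ s, Qbar S p r * Qpow S n r q :=
    fun q _ => Qpow_left S n q hp
  rw [Finset.sum_congr rfl e0, Finset.sum_comm]
  exact Finset.sum_congr rfl fun r _ => by rw [ordMass, ← Finset.mul_sum]

lemma reach [Nonempty V] (S : Setup μ μ' s A) {f0 g0 : V → ℤ} (h0 : f0 ≤ g0)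
    (hf0 : 0 < μ f0) (hg0 : 0 < μ' g0) :
    ∀ (n j j' : ℕ), j + j' = n → ∀ (p : (V → ℤ) × (V → ℤ)), (0 < μ p.1 ∧ 0 < μ' p.2) →
    ∀ (fp gp : ℕ → V → ℤ), fp 0 = p.1 → fp j = f0 → (∀ i ≤ j, 0 < μ (fp i)) →
    (∀ i < j, ∃ x, ∀ y, y ≠ x → fp (i+1) y = fp i y) →
    gp 0 = p.2 → gp j' = g0 → (∀ i ≤ j', 0 < μ' (gp i)) →
    (∀ i < j', ∃ x, ∀ y, y ≠ x → gp (i+1) y = gp i y) →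
    0 < ordMass S n p := by
  intro n
  induction n with
  | zero =>
    intro j j' hjj p hp fp gp hfp0 hfpj hfppos hfpstep hgp0 hgpj hgppos hgpstep
    have hj : j = 0 := by omega
    have hj' : j' = 0 := by omega
    subst hj; subst hj'
    have hp1 : p.1 = f0 := by rw [← hfp0, hfpj]
    have hp2 : p.2 = g0 := by rw [← hgp0, hgpj]
    have hle : p.1 ≤ p.2 := by rw [hp1, hp2]; exact h0
    rw [ordMass_one S 0 hp hle]
    exact one_pos
  | succ n IH =>
    intro j j' hjj p hp fp gp hfp0 hfpj hfppos hfpstep hgp0 hgpj hgppos hgpstep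
    by_cases hle : p.1 ≤ p.2
    · rw [ordMass_one S (n+1) hp hle]
      exact one_pos
    · have key : ∀ r : (V → ℤ) × (V → ℤ), (0 < μ r.1 ∧ 0 < μ' r.2) → 0 < Qbar S p r →
          0 < ordMass S n r → 0 < ordMass S (n+1) p := by
        intro r hr hQ hM
        rw [ordMass_step S n hp]
        have hsingle : Qbar S p r * ordMass S n r
            ≤ ∑ r' ∈ s ×ˢ s, Qbar S p r' * ordMass S n r' :=
          Finset.single_le_sum
            (fun r' _ => mul_nonneg (Qbar_nonneg S p r') (ordMass_nonneg S n r'))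
            (good_mem S hr)
        exact lt_of_lt_of_le (mul_pos hQ hM) hsingle
      cases j with
      | zero =>
        cases j' with
        | zero =>
          have hp1 : p.1 = f0 := by rw [← hfp0, hfpj]
          have hp2 : p.2 = g0 := by rw [← hgp0, hgpj]
          exact absurd (by rw [hp1, hp2]; exact h0) hle
        | succ j'' =>
          obtain ⟨x, hx⟩ := hgpstep 0 (Nat.succ_pos _)
          have hg1 : 0 < μ' (gp 1) := hgppos 1 (by omega)
          have hOk : OffEq x (gp 1) p.2 := fun y hy => by rw [hx y hy, hgp0]
          apply key (p.1, gp 1) ⟨hp.1, hg1⟩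
          · exact Qbar_pos S hp hle hp.1 (OffEq.refl x p.1) hg1 hOk
          · exact IH 0 j'' (by omega) (p.1, gp 1) ⟨hp.1, hg1⟩ fp (fun i => gp (i+1))
              hfp0 hfpj hfppos hfpstep rfl (by rw [← hgpj]) (fun i hi => hgppos (i+1) (by omega))
              (fun i hi => hgpstep (i+1) (by omega))
      | succ j'' =>
        obtain ⟨x, hx⟩ := hfpstep 0 (Nat.succ_pos _)
        have hf1 : 0 < μ (fp 1) := hfppos 1 (by omega)
        have hOh : OffEq x (fp 1) p.1 := fun y hy => by rw [hx y hy, hfp0]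
        apply key (fp 1, p.2) ⟨hf1, hp.2⟩
        · exact Qbar_pos S hp hle hf1 hOh hp.2 (OffEq.refl x p.2)
        · exact IH j'' j' (by omega) (fp 1, p.2) ⟨hf1, hp.2⟩ (fun i => fp (i+1)) gp
            rfl (by rw [← hfpj]) (fun i hi => hfppos (i+1) (by omega))
            (fun i hi => hfpstep (i+1) (by omega)) hgp0 hgpj hgppos hgpstep

lemma exists_eps [Nonempty V] (S : Setup μ μ' s A) (hirr : IrreducibleSS μ)
    (hirr' : IrreducibleSS μ') (hinit : ∃ f g : V → ℤ, f ≤ g ∧ 0 < μ f ∧ 0 < μ' g) :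
    ∃ (N : ℕ) (ε : ℝ), 0 < ε ∧
      ∀ p : (V → ℤ) × (V → ℤ), (0 < μ p.1 ∧ 0 < μ' p.2) → ε ≤ ordMass S N p := by
  obtain ⟨f0, g0, h0, hf0, hg0⟩ := hinit
  have hreach : ∀ p : (V → ℤ) × (V → ℤ), ∃ n : ℕ,
      (0 < μ p.1 ∧ 0 < μ' p.2) → 0 < ordMass S n p := by
    intro p
    by_cases hp : 0 < μ p.1 ∧ 0 < μ' p.2
    · obtain ⟨m, fp, hfp0, hfpm, hfppos, hfpstep⟩ := hirr p.1 f0 hp.1 hf0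
      obtain ⟨m', gp, hgp0, hgpm, hgppos, hgpstep⟩ := hirr' p.2 g0 hp.2 hg0
      exact ⟨m + m', fun _ => reach S h0 hf0 hg0 (m + m') m m' rfl p hp fp gp
        hfp0 hfpm hfppos hfpstep hgp0 hgpm hgppos hgpstep⟩
    · exact ⟨0, fun h => absurd h hp⟩
  choose nn hnn using hreach
  set goodS := (s ×ˢ s).filter (fun p => 0 < μ p.1 ∧ 0 < μ' p.2) with hgoodS
  set N := goodS.sup nn with hN
  rcases Finset.eq_empty_or_nonempty goodS with hemp | hne
  · refine ⟨N, 1, one_pos, fun p hp => ?_⟩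
    have : p ∈ goodS := Finset.mem_filter.mpr ⟨good_mem S hp, hp⟩
    rw [hemp] at this
    exact absurd this (Finset.notMem_empty p)
  · obtain ⟨p0, hp0mem, hp0min⟩ := Finset.exists_min_image goodS (ordMass S N) hne
    have hp0good : 0 < μ p0.1 ∧ 0 < μ' p0.2 := (Finset.mem_filter.mp hp0mem).2
    refine ⟨N, ordMass S N p0, ?_, fun p hp => ?_⟩
    · have h1 : 0 < ordMass S (nn p0) p0 := hnn p0 hp0good
      have h2 : nn p0 ≤ N := Finset.le_sup hp0mem
      exact lt_of_lt_of_le h1 (ordMass_mono_le S h2 hp0good)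
    · exact hp0min p (Finset.mem_filter.mpr ⟨good_mem S hp, hp⟩)

def KSet (μ μ' : (V → ℤ) → ℝ) (s : Finset (V → ℤ)) : Set (((V → ℤ) × (V → ℤ)) → ℝ) :=
  {ρ | (∀ q, ρ q ∈ (if q ∈ s ×ˢ s then Set.Icc (0:ℝ) 1 else ({0} : Set ℝ))) ∧
       (∀ h : V → ℤ, ∑ k ∈ s, ρ (h, k) = μ h) ∧ (∀ k : V → ℤ, ∑ h ∈ s, ρ (h, k) = μ' k)}

lemma K_nonneg {ρ : ((V → ℤ) × (V → ℤ)) → ℝ} (hρ : ρ ∈ KSet μ μ' s)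
    (q : (V → ℤ) × (V → ℤ)) : 0 ≤ ρ q := by
  have h := hρ.1 q
  split_ifs at h with h1
  · exact h.1
  · rw [Set.mem_singleton_iff.mp h]

lemma K_zero {ρ : ((V → ℤ) × (V → ℤ)) → ℝ} (hρ : ρ ∈ KSet μ μ' s)
    {q : (V → ℤ) × (V → ℤ)} (hq : q ∉ s ×ˢ s) : ρ q = 0 := by
  have h := hρ.1 q
  rw [if_neg hq] at h
  exact Set.mem_singleton_iff.mp h

lemma K_good {ρ : ((V → ℤ) × (V → ℤ)) → ℝ} (hρ : ρ ∈ KSet μ μ' s)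
    {p : (V → ℤ) × (V → ℤ)} (hp : ρ p ≠ 0) : 0 < μ p.1 ∧ 0 < μ' p.2 := by
  have hmem : p ∈ s ×ˢ s := by
    by_contra hc
    exact hp (K_zero hρ hc)
  rw [Finset.mem_product] at hmem
  have hppos : 0 < ρ p := lt_of_le_of_ne (K_nonneg hρ p) (Ne.symm hp)
  constructor
  · rw [← hρ.2.1 p.1]
    have h1 : ρ (p.1, p.2) ≤ ∑ k ∈ s, ρ (p.1, k) :=
      Finset.single_le_sum (fun k _ => K_nonneg hρ _) hmem.2
    exact lt_of_lt_of_le hppos h1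
  · rw [← hρ.2.2 p.2]
    have h1 : ρ (p.1, p.2) ≤ ∑ h ∈ s, ρ (h, p.2) :=
      Finset.single_le_sum (f := fun h => ρ (h, p.2)) (fun h _ => K_nonneg hρ _) hmem.1
    exact lt_of_lt_of_le hppos h1

lemma K_total {ρ : ((V → ℤ) × (V → ℤ)) → ℝ} (hρ : ρ ∈ KSet μ μ' s)
    (hμsum : ∑ f ∈ s, μ f = 1) : ∑ q ∈ s ×ˢ s, ρ q = 1 := by
  rw [Finset.sum_product]
  have e1 : ∀ h ∈ s, ∑ k ∈ s, ρ (h, k) = μ h := fun h _ => hρ.2.1 h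
  rw [Finset.sum_congr rfl e1, hμsum]

def stepK (S : Setup μ μ' s A) (ρ : ((V → ℤ) × (V → ℤ)) → ℝ) : ((V → ℤ) × (V → ℤ)) → ℝ :=
  fun q => ∑ p ∈ s ×ˢ s, ρ p * Qbar S p q

lemma step_mem [Nonempty V] (S : Setup μ μ' s A) (hμsum : ∑ f ∈ s, μ f = 1)
    {ρ : ((V → ℤ) × (V → ℤ)) → ℝ} (hρ : ρ ∈ KSet μ μ' s) : stepK S ρ ∈ KSet μ μ' s := by
  have hterm_nonneg : ∀ q, 0 ≤ stepK S ρ q := fun q =>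
    Finset.sum_nonneg fun p _ => mul_nonneg (K_nonneg hρ p) (Qbar_nonneg S p q)
  have hzero : ∀ q ∉ s ×ˢ s, stepK S ρ q = 0 := by
    intro q hq
    apply Finset.sum_eq_zero
    intro p _
    rcases eq_or_ne (ρ p) 0 with hz | hz
    · rw [hz, zero_mul]
    · rcases eq_or_ne (Qbar S p q) 0 with hz2 | hz2
      · rw [hz2, mul_zero]
      · exact absurd (good_mem S (Qbar_good S (K_good hρ hz) hz2)) hq
  have hrow : ∀ h : V → ℤ, ∑ k ∈ s, stepK S ρ (h, k) = μ h := by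
    intro h
    rw [show ∑ k ∈ s, stepK S ρ (h, k)
        = ∑ p ∈ s ×ˢ s, ∑ k ∈ s, ρ p * Qbar S p (h, k) from Finset.sum_comm]
    have e1 : ∀ p ∈ s ×ˢ s, ∑ k ∈ s, ρ p * Qbar S p (h, k) = ρ p * Pbar μ A p.1 h := by
      intro p _
      rcases eq_or_ne (ρ p) 0 with hz | hz
      · rw [hz]
        simp
      · rw [← Finset.mul_sum, Qbar_margin1 S (K_good hρ hz) h]
    rw [Finset.sum_congr rfl e1, Finset.sum_product]
    have e2 : ∀ f ∈ s, ∑ g ∈ s, ρ (f, g) * Pbar μ A (f, g).1 h = μ f * Pbar μ A f h := by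
      intro f _
      show ∑ g ∈ s, ρ (f, g) * Pbar μ A f h = μ f * Pbar μ A f h
      rw [← Finset.sum_mul, hρ.2.1 f]
    rw [Finset.sum_congr rfl e2]
    exact Pbar_stationary S.hnn S.hs S.hsA h
  have hcol : ∀ k : V → ℤ, ∑ h ∈ s, stepK S ρ (h, k) = μ' k := by
    intro k
    rw [show ∑ h ∈ s, stepK S ρ (h, k)
        = ∑ p ∈ s ×ˢ s, ∑ h ∈ s, ρ p * Qbar S p (h, k) from Finset.sum_comm]
    have e1 : ∀ p ∈ s ×ˢ s, ∑ h ∈ s, ρ p * Qbar S p (h, k) = ρ p * Pbar μ' A p.2 k := by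
      intro p _
      rcases eq_or_ne (ρ p) 0 with hz | hz
      · rw [hz]
        simp
      · rw [← Finset.mul_sum, Qbar_margin2 S (K_good hρ hz) k]
    rw [Finset.sum_congr rfl e1, Finset.sum_product]
    rw [show ∑ f ∈ s, ∑ g ∈ s, ρ (f, g) * Pbar μ' A (f, g).2 k
        = ∑ g ∈ s, (∑ f ∈ s, ρ (f, g)) * Pbar μ' A g k by
      rw [Finset.sum_comm]
      exact Finset.sum_congr rfl fun g _ => by rw [Finset.sum_mul]]
    have e3 : ∀ g ∈ s, (∑ f ∈ s, ρ (f, g)) * Pbar μ' A g k = μ' g * Pbar μ' A g k := by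
      intro g _
      rw [hρ.2.2 g]
    rw [Finset.sum_congr rfl e3]
    exact Pbar_stationary S.hnn' S.hs' S.hsA k
  have htotal : ∑ q ∈ s ×ˢ s, stepK S ρ q = 1 := by
    rw [Finset.sum_product]
    have e1 : ∀ h ∈ s, ∑ k ∈ s, stepK S ρ (h, k) = μ h := fun h _ => hrow h
    rw [Finset.sum_congr rfl e1, hμsum]
  refine ⟨fun q => ?_, hrow, hcol⟩
  split_ifs with h1
  · refine ⟨hterm_nonneg q, ?_⟩
    have h2 : stepK S ρ q ≤ ∑ q' ∈ s ×ˢ s, stepK S ρ q' :=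
      Finset.single_le_sum (fun q' _ => hterm_nonneg q') h1
    rw [htotal] at h2
    exact h2
  · exact Set.mem_singleton_iff.mpr (hzero q h1)

lemma step_pow [Nonempty V] (S : Setup μ μ' s A)
    {ρ : ((V → ℤ) × (V → ℤ)) → ℝ} (hρ : ρ ∈ KSet μ μ' s) (n : ℕ)
    (q : (V → ℤ) × (V → ℤ)) :
    (stepK S)^[n] ρ q = ∑ p ∈ s ×ˢ s, ρ p * Qpow S n p q := by
  induction n generalizing q with
  | zero =>
    simp only [Function.iterate_zero, id, Qpow]
    have e1 : ∀ p ∈ s ×ˢ s, ρ p * (if p = q then (1:ℝ) else 0) = if q = p then ρ p else 0 := by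
      intro p _
      by_cases h : p = q
      · rw [if_pos h, if_pos h.symm, mul_one, h]
      · rw [if_neg h, if_neg (fun hh => h hh.symm), mul_zero]
    rw [Finset.sum_congr rfl e1, Finset.sum_ite_eq (s ×ˢ s) q ρ]
    split_ifs with h
    · rfl
    · exact K_zero hρ h
  | succ n IH =>
    rw [Function.iterate_succ_apply']
    show ∑ r ∈ s ×ˢ s, (stepK S)^[n] ρ r * Qbar S r q = _
    have e1 : ∀ r ∈ s ×ˢ s, (stepK S)^[n] ρ r * Qbar S r q
        = ∑ p ∈ s ×ˢ s, ρ p * (Qpow S n p r * Qbar S r q) := by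
      intro r _
      rw [IH r, Finset.sum_mul]
      exact Finset.sum_congr rfl fun p _ => by ring
    rw [Finset.sum_congr rfl e1, Finset.sum_comm]
    apply Finset.sum_congr rfl
    intro p _
    rw [← Finset.mul_sum]
    rfl

end Holley

theorem stmt_14 {V : Type*} [Fintype V] [DecidableEq V]
    (μ μ' : (V → ℤ) → ℝ)
    (hnn : ∀ f, 0 ≤ μ f) (hnn' : ∀ f, 0 ≤ μ' f)
    (hsum : HasSum μ 1) (hsum' : HasSum μ' 1)
    (hfin : (Function.support μ).Finite) (hfin' : (Function.support μ').Finite)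
    (hirr : IrreducibleSS μ) (hirr' : IrreducibleSS μ')
    (hinit : ∃ f g : V → ℤ, f ≤ g ∧ 0 < μ f ∧ 0 < μ' g)
    (hHolley : ∀ (x : V) (k : ℤ) (χ χ' : V → ℤ), (∀ y : V, y ≠ x → χ y ≤ χ' y) →
      (∑' a : ℤ, if k ≤ a then μ (Function.update χ x a) else 0) *
          (∑' a : ℤ, μ' (Function.update χ' x a)) ≤
        (∑' a : ℤ, if k ≤ a then μ' (Function.update χ' x a) else 0) *
          (∑' a : ℤ, μ (Function.update χ x a))) :
    (∃ ν : (V → ℤ) → (V → ℤ) → ℝ,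
        (∀ f g, 0 ≤ ν f g) ∧
        (∀ f g, ν f g ≠ 0 → f ≤ g) ∧
        (∀ f, (∑' g, ν f g) = μ f) ∧
        (∀ g, (∑' f, ν f g) = μ' g)) ∧
    ∀ F : (V → ℤ) → ℝ, Monotone F →
      (∑' f, μ f * F f) ≤ ∑' f, μ' f * F f := by
  classical
  set s : Finset (V → ℤ) := hfin.toFinset ∪ hfin'.toFinset with hsdef
  have hs : ∀ f, μ f ≠ 0 → f ∈ s := fun f hf =>
    Finset.mem_union_left _ (hfin.mem_toFinset.mpr (Function.mem_support.mpr hf))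
  have hs' : ∀ f, μ' f ≠ 0 → f ∈ s := fun f hf =>
    Finset.mem_union_right _ (hfin'.mem_toFinset.mpr (Function.mem_support.mpr hf))
  set A : Finset ℤ := s.biUnion (fun f => Finset.image f Finset.univ) with hAdef
  have hsA : ∀ h ∈ s, ∀ x : V, h x ∈ A := fun h hh x =>
    Finset.mem_biUnion.mpr ⟨h, hh, Finset.mem_image.mpr ⟨x, Finset.mem_univ x, rfl⟩⟩
  have hμs : ∀ f ∉ s, μ f = 0 := fun f hf => by
    by_contra hc; exact hf (hs f hc)
  have hμ's : ∀ f ∉ s, μ' f = 0 := fun f hf => by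
    by_contra hc; exact hf (hs' f hc)
  have hμsum : ∑ f ∈ s, μ f = 1 := by
    rw [← tsum_eq_sum (L := SummationFilter.unconditional _) hμs]; exact hsum.tsum_eq
  have hμ'sum : ∑ f ∈ s, μ' f = 1 := by
    rw [← tsum_eq_sum (L := SummationFilter.unconditional _) hμ's]; exact hsum'.tsum_eq
  have hμle1 : ∀ f, μ f ≤ 1 := by
    intro f
    by_cases hf : f ∈ s
    · rw [← hμsum]; exact Finset.single_le_sum (fun g _ => hnn g) hf
    · rw [hμs f hf]; exact zero_le_one
  have hμ'le1 : ∀ f, μ' f ≤ 1 := by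
    intro f
    by_cases hf : f ∈ s
    · rw [← hμ'sum]; exact Finset.single_le_sum (fun g _ => hnn' g) hf
    · rw [hμ's f hf]; exact zero_le_one
  have hHA : ∀ (x : V) (k : ℤ) (χ χ' : V → ℤ), (∀ y : V, y ≠ x → χ y ≤ χ' y) →
      (∑ a ∈ A, if k ≤ a then μ (Function.update χ x a) else 0) * colsum μ' A x χ' ≤
      (∑ a ∈ A, if k ≤ a then μ' (Function.update χ' x a) else 0) * colsum μ A x χ := by
    intro x k χ χ' hχ
    have hv1 : ∀ a ∉ A, μ (Function.update χ x a) = 0 := by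
      intro a ha
      by_contra hc
      have h2 := hsA _ (hs _ hc) x
      rw [Function.update_self] at h2
      exact ha h2
    have hv2 : ∀ a ∉ A, μ' (Function.update χ' x a) = 0 := by
      intro a ha
      by_contra hc
      have h2 := hsA _ (hs' _ hc) x
      rw [Function.update_self] at h2
      exact ha h2
    have t1 : (∑' a : ℤ, if k ≤ a then μ (Function.update χ x a) else 0)
        = ∑ a ∈ A, if k ≤ a then μ (Function.update χ x a) else 0 :=
      tsum_eq_sum (fun a ha => by rw [hv1 a ha]; split_ifs <;> rfl)
    have t2 : (∑' a : ℤ, if k ≤ a then μ' (Function.update χ' x a) else 0)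
        = ∑ a ∈ A, if k ≤ a then μ' (Function.update χ' x a) else 0 :=
      tsum_eq_sum (fun a ha => by rw [hv2 a ha]; split_ifs <;> rfl)
    have t3 : (∑' a : ℤ, μ (Function.update χ x a)) = colsum μ A x χ :=
      tsum_eq_sum hv1
    have t4 : (∑' a : ℤ, μ' (Function.update χ' x a)) = colsum μ' A x χ' :=
      tsum_eq_sum hv2
    have hH := hHolley x k χ χ' hχ
    rw [t1, t2, t3, t4] at hH
    exact hH
  have S : Setup μ μ' s A := ⟨hnn, hnn', hs, hs', hsA, hHA⟩
  -- compactness of the set of couplings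
  have hKcompact : IsCompact (KSet μ μ' s) := by
    have h1 : KSet μ μ' s
        = (Set.univ.pi (fun q : (V → ℤ) × (V → ℤ) =>
            if q ∈ s ×ˢ s then Set.Icc (0:ℝ) 1 else ({0} : Set ℝ)))
        ∩ ({ρ : ((V → ℤ) × (V → ℤ)) → ℝ | ∀ h : V → ℤ, ∑ k ∈ s, ρ (h, k) = μ h}
          ∩ {ρ : ((V → ℤ) × (V → ℤ)) → ℝ | ∀ k : V → ℤ, ∑ h ∈ s, ρ (h, k) = μ' k}) := by
      ext ρ
      simp only [KSet, Set.mem_inter_iff, Set.mem_setOf_eq, Set.mem_pi, Set.mem_univ,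
        forall_true_left]
    rw [h1]
    apply IsCompact.inter_right
    · exact isCompact_univ_pi (fun q => by
        split_ifs
        · exact isCompact_Icc
        · exact isCompact_singleton)
    · apply IsClosed.inter
      · have h2 : {ρ : ((V → ℤ) × (V → ℤ)) → ℝ | ∀ h : V → ℤ, ∑ k ∈ s, ρ (h, k) = μ h}
            = ⋂ h : V → ℤ, {ρ : ((V → ℤ) × (V → ℤ)) → ℝ | ∑ k ∈ s, ρ (h, k) = μ h} := by
          ext ρ
          simp [Set.mem_iInter]
        rw [h2]
        exact isClosed_iInter fun h => isClosed_eq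
          (continuous_finset_sum _ (fun k _ => continuous_apply (h, k))) continuous_const
      · have h2 : {ρ : ((V → ℤ) × (V → ℤ)) → ℝ | ∀ k : V → ℤ, ∑ h ∈ s, ρ (h, k) = μ' k}
            = ⋂ k : V → ℤ, {ρ : ((V → ℤ) × (V → ℤ)) → ℝ | ∑ h ∈ s, ρ (h, k) = μ' k} := by
          ext ρ
          simp [Set.mem_iInter]
        rw [h2]
        exact isClosed_iInter fun k => isClosed_eq
          (continuous_finset_sum _ (fun h _ => continuous_apply (h, k))) continuous_const
  have hKne : (KSet μ μ' s).Nonempty := by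
    refine ⟨fun q => μ q.1 * μ' q.2, fun q => ?_, fun h => ?_, fun k => ?_⟩
    · split_ifs with h1
      · exact ⟨mul_nonneg (hnn _) (hnn' _), mul_le_one₀ (hμle1 _) (hnn' _) (hμ'le1 _)⟩
      · rw [Finset.mem_product, not_and_or] at h1
        rw [Set.mem_singleton_iff]
        show μ q.1 * μ' q.2 = 0
        rcases h1 with h1 | h1
        · rw [hμs _ h1, zero_mul]
        · rw [hμ's _ h1, mul_zero]
    · show ∑ k ∈ s, μ h * μ' k = μ h
      rw [← Finset.mul_sum, hμ'sum, mul_one]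
    · show ∑ h ∈ s, μ h * μ' k = μ' k
      rw [← Finset.sum_mul, hμsum, one_mul]
  have hWcont : Continuous (fun ρ : ((V → ℤ) × (V → ℤ)) → ℝ =>
      ∑ q ∈ (s ×ˢ s).filter (fun q => q.1 ≤ q.2), ρ q) :=
    continuous_finset_sum _ (fun q _ => continuous_apply q)
  obtain ⟨ν, hνK, hνmax⟩ := hKcompact.exists_isMaxOn hKne hWcont.continuousOn
  -- ν vanishes on non-ordered pairs
  have hbadzero : ∑ q ∈ (s ×ˢ s).filter (fun q => ¬ q.1 ≤ q.2), ν q = 0 := by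
    rcases isEmpty_or_nonempty V with hV | hV
    · apply Finset.sum_eq_zero
      intro q hq
      have hle : q.1 ≤ q.2 := fun x => isEmptyElim x
      exact absurd hle (Finset.mem_filter.mp hq).2
    · obtain ⟨N, ε, hε, hεord⟩ := exists_eps S hirr hirr' hinit
      have hiter : ∀ n : ℕ, (stepK S)^[n] ν ∈ KSet μ μ' s := by
        intro n
        induction n with
        | zero => simpa using hνK
        | succ n IH =>
          rw [Function.iterate_succ_apply']
          exact step_mem S hμsum IH
      have hσK := hiter N
      have hWnegσ : ∑ q ∈ (s ×ˢ s).filter (fun q => ¬ q.1 ≤ q.2), (stepK S)^[N] ν q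
          ≤ (1 - ε) * ∑ q ∈ (s ×ˢ s).filter (fun q => ¬ q.1 ≤ q.2), ν q := by
        have e1 : ∀ q ∈ (s ×ˢ s).filter (fun q => ¬ q.1 ≤ q.2),
            (stepK S)^[N] ν q = ∑ p ∈ s ×ˢ s, ν p * Qpow S N p q :=
          fun q _ => step_pow S hνK N q
        rw [Finset.sum_congr rfl e1, Finset.sum_comm]
        have e2 : ∀ p ∈ s ×ˢ s, ∑ q ∈ (s ×ˢ s).filter (fun q => ¬ q.1 ≤ q.2), ν p * Qpow S N p q
            ≤ (if p ∈ (s ×ˢ s).filter (fun q => ¬ q.1 ≤ q.2) then (1 - ε) * ν p else 0) := by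
          intro p hp
          rcases eq_or_ne (ν p) 0 with hz | hz
          · rw [hz]
            have hLHS : ∑ q ∈ (s ×ˢ s).filter (fun q => ¬ q.1 ≤ q.2), (0:ℝ) * Qpow S N p q
                = 0 := by
              apply Finset.sum_eq_zero
              intro q _
              rw [zero_mul]
            rw [hLHS]
            split_ifs
            · rw [mul_zero]
            · exact le_refl _
          · have hgood := K_good hνK hz
            by_cases hle : p.1 ≤ p.2
            · have hzero : ∀ q ∈ (s ×ˢ s).filter (fun q => ¬ q.1 ≤ q.2),
                  ν p * Qpow S N p q = 0 := by
                intro q hq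
                rcases eq_or_ne (Qpow S N p q) 0 with h2 | h2
                · rw [h2, mul_zero]
                · exact absurd (Qpow_absorb S N hgood hle h2) (Finset.mem_filter.mp hq).2
              rw [Finset.sum_eq_zero hzero]
              split_ifs with h3
              · exact absurd hle (Finset.mem_filter.mp h3).2
              · exact le_refl _
            · have hpbad : p ∈ (s ×ˢ s).filter (fun q => ¬ q.1 ≤ q.2) :=
                Finset.mem_filter.mpr ⟨hp, hle⟩
              rw [if_pos hpbad, ← Finset.mul_sum]
              have hsplit : ∑ q ∈ (s ×ˢ s).filter (fun q => q.1 ≤ q.2), Qpow S N p q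
                  + ∑ q ∈ (s ×ˢ s).filter (fun q => ¬ q.1 ≤ q.2), Qpow S N p q = 1 := by
                rw [Finset.sum_filter_add_sum_filter_not]
                exact Qpow_rowsum S N hgood
              have hord := hεord p hgood
              rw [ordMass] at hord
              have hbadmass : ∑ q ∈ (s ×ˢ s).filter (fun q => ¬ q.1 ≤ q.2), Qpow S N p q
                  ≤ 1 - ε := by
                have hb : ∑ q ∈ (s ×ˢ s).filter (fun q => ¬ q.1 ≤ q.2), Qpow S N p q
                    = 1 - ∑ q ∈ (s ×ˢ s).filter (fun q => q.1 ≤ q.2), Qpow S N p q := by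
                  linear_combination hsplit
                rw [hb]
                exact sub_le_sub_left hord 1
              calc ν p * ∑ q ∈ (s ×ˢ s).filter (fun q => ¬ q.1 ≤ q.2), Qpow S N p q
                  ≤ ν p * (1 - ε) :=
                    mul_le_mul_of_nonneg_left hbadmass (K_nonneg hνK p)
                _ = (1 - ε) * ν p := mul_comm _ _
        calc ∑ p ∈ s ×ˢ s, ∑ q ∈ (s ×ˢ s).filter (fun q => ¬ q.1 ≤ q.2), ν p * Qpow S N p q
            ≤ ∑ p ∈ s ×ˢ s, (if p ∈ (s ×ˢ s).filter (fun q => ¬ q.1 ≤ q.2)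
                then (1 - ε) * ν p else 0) := Finset.sum_le_sum e2
          _ = (1 - ε) * ∑ q ∈ (s ×ˢ s).filter (fun q => ¬ q.1 ≤ q.2), ν q := by
              rw [← Finset.sum_filter]
              rw [show (s ×ˢ s).filter (fun p => p ∈ (s ×ˢ s).filter (fun q => ¬ q.1 ≤ q.2))
                  = (s ×ˢ s).filter (fun q => ¬ q.1 ≤ q.2) by
                rw [Finset.filter_mem_eq_inter]
                exact Finset.inter_eq_right.mpr (Finset.filter_subset _ _)]
              rw [Finset.mul_sum]
      have hWσ : ∑ q ∈ (s ×ˢ s).filter (fun q => q.1 ≤ q.2), (stepK S)^[N] ν q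
          ≤ ∑ q ∈ (s ×ˢ s).filter (fun q => q.1 ≤ q.2), ν q := hνmax hσK
      have hWν_tot : ∑ q ∈ (s ×ˢ s).filter (fun q => q.1 ≤ q.2), ν q
          + ∑ q ∈ (s ×ˢ s).filter (fun q => ¬ q.1 ≤ q.2), ν q = 1 := by
        rw [Finset.sum_filter_add_sum_filter_not]
        exact K_total hνK hμsum
      have hWσ_tot : ∑ q ∈ (s ×ˢ s).filter (fun q => q.1 ≤ q.2), (stepK S)^[N] ν q
          + ∑ q ∈ (s ×ˢ s).filter (fun q => ¬ q.1 ≤ q.2), (stepK S)^[N] ν q = 1 := by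
        rw [Finset.sum_filter_add_sum_filter_not]
        exact K_total hσK hμsum
      have hbadnn : 0 ≤ ∑ q ∈ (s ×ˢ s).filter (fun q => ¬ q.1 ≤ q.2), ν q :=
        Finset.sum_nonneg fun q _ => K_nonneg hνK q
      nlinarith
  have hbad : ∀ q ∈ (s ×ˢ s).filter (fun q : (V → ℤ) × (V → ℤ) => ¬ q.1 ≤ q.2), ν q = 0 :=
    fun q hq => (Finset.sum_eq_zero_iff_of_nonneg (fun q _ => K_nonneg hνK q)).mp hbadzero q hq
  have hord : ∀ f g, ν (f, g) ≠ 0 → f ≤ g := by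
    intro f g hne
    by_cases hmem : (f, g) ∈ s ×ˢ s
    · by_contra hc
      exact hne (hbad (f, g) (Finset.mem_filter.mpr ⟨hmem, hc⟩))
    · exact absurd (K_zero hνK hmem) hne
  have hrowt : ∀ f, (∑' g, ν (f, g)) = μ f := by
    intro f
    have hvan : ∀ g ∉ s, ν (f, g) = 0 := by
      intro g hg
      apply K_zero hνK
      rw [Finset.mem_product]
      exact fun hc => hg hc.2
    rw [tsum_eq_sum hvan]
    exact hνK.2.1 f
  have hcolt : ∀ g, (∑' f, ν (f, g)) = μ' g := by
    intro g
    have hvan : ∀ f ∉ s, ν (f, g) = 0 := by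
      intro f hf
      apply K_zero hνK
      rw [Finset.mem_product]
      exact fun hc => hf hc.1
    rw [tsum_eq_sum hvan]
    exact hνK.2.2 g
  refine ⟨⟨fun f g => ν (f, g), fun f g => K_nonneg hνK (f, g), hord, hrowt, hcolt⟩, ?_⟩
  intro F hF
  have hμvan : ∀ f ∉ s, μ f * F f = 0 := fun f hf => by rw [hμs f hf, zero_mul]
  have hμ'van : ∀ f ∉ s, μ' f * F f = 0 := fun f hf => by rw [hμ's f hf, zero_mul]
  rw [tsum_eq_sum hμvan, tsum_eq_sum hμ'van]
  have eμ : ∑ f ∈ s, μ f * F f = ∑ f ∈ s, ∑ g ∈ s, ν (f, g) * F f := by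
    apply Finset.sum_congr rfl
    intro f _
    rw [← hνK.2.1 f, Finset.sum_mul]
  have eμ' : ∑ g ∈ s, μ' g * F g = ∑ f ∈ s, ∑ g ∈ s, ν (f, g) * F g := by
    rw [Finset.sum_comm]
    apply Finset.sum_congr rfl
    intro g _
    rw [← hνK.2.2 g, Finset.sum_mul]
  rw [eμ, eμ']
  apply Finset.sum_le_sum
  intro f _
  apply Finset.sum_le_sum
  intro g _
  rcases eq_or_ne (ν (f, g)) 0 with hz | hz
  · rw [hz, zero_mul, zero_mul]
  · exact mul_le_mul_of_nonneg_left (hF (hord f g hz)) (K_nonneg hνK (f, g))
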